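/- There exists a universal constant c > 0 (one may take c = 1/25600) such that for every even integer s ≥ 16 and every integer n ≥ s, in the outlier-free categorical model the minimax total-variation risk satisfies: inf over all measurable estimators θ̄_n : {e_1,…,e_s}^n → Δ^{s-1} of sup over θ ∈ Δ^{s-1} of E_θ[d_TV(θ̄_n(X_1,…,X_n), θ)] ≥ c (s/n)^{1/2}, where under E_θ the observations X_1,…,X_n are i.i.d. with P(X_i = e_j) = θ_j for j = 1,…,s. -/

import Mathlib

open MeasureTheory ProbabilityTheory

noncomputable section

/-- The probability simplex `Δ^{s-1}` in `ℝ^s`. -/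
def simplex (s : ℕ) : Set (Fin s → ℝ) :=
  {v | (∀ j, 0 ≤ v j) ∧ ∑ j, v j = 1}

/-- Total variation distance between two points of the simplex. -/
def dTV {s : ℕ} (u v : Fin s → ℝ) : ℝ := (1 / 2) * ∑ j, |u j - v j|

/-- The `j`-th canonical basis vector of `ℝ^s`. -/
def basisVec (s : ℕ) (j : Fin s) : Fin s → ℝ := fun i => if i = j then 1 else 0

/-- The categorical distribution on `{e_1, …, e_s}` with weights `θ`. -/
def catMeasure (s : ℕ) (θ : Fin s → ℝ) : Measure (Fin s → ℝ) :=
  ∑ j : Fin s, ENNReal.ofReal (θ j) • Measure.dirac (basisVec s j)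

instance (s : ℕ) (θ : Fin s → ℝ) : IsFiniteMeasure (catMeasure s θ) := by
  constructor
  rw [catMeasure]
  simp only [Measure.coe_finset_sum, Finset.sum_apply, Measure.smul_apply, smul_eq_mul]
  refine ENNReal.sum_lt_top.mpr fun j _ => ?_
  exact ENNReal.mul_lt_top ENNReal.ofReal_lt_top (by simp [Measure.dirac_apply' _ MeasurableSet.univ])

lemma pi_catMeasure (s n : ℕ) (θ : Fin s → ℝ) :
    Measure.pi (fun _ : Fin n => catMeasure s θ)
      = ∑ g : Fin n → Fin s,
          (∏ i, ENNReal.ofReal (θ (g i))) • Measure.dirac (fun i => basisVec s (g i)) := by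
  refine Measure.pi_eq fun A hA => ?_
  classical
  simp only [Measure.coe_finset_sum, Finset.sum_apply, Measure.smul_apply, smul_eq_mul,
    Measure.dirac_apply' _ (MeasurableSet.univ_pi hA)]
  have hcat : ∀ i, catMeasure s θ (A i) = ∑ j, ENNReal.ofReal (θ j) *
      (A i).indicator 1 (basisVec s j) := by
    intro i
    rw [catMeasure]
    simp [Measure.dirac_apply' _ (hA i)]
  simp only [hcat]
  rw [Finset.prod_univ_sum]
  refine Finset.sum_congr rfl fun g _ => ?_
  rw [Finset.prod_mul_distrib]
  congr 1
  by_cases h : (fun i => basisVec s (g i)) ∈ Set.univ.pi A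
  · rw [Set.indicator_of_mem h]
    simp only [Pi.one_apply]
    rw [Set.mem_univ_pi] at h
    rw [Finset.prod_eq_one]
    intro i _
    rw [Set.indicator_of_mem (h i)]
    rfl
  · rw [Set.indicator_of_notMem h]
    rw [Set.mem_univ_pi] at h
    push_neg at h
    obtain ⟨i, hi⟩ := h
    symm
    apply Finset.prod_eq_zero (Finset.mem_univ i)
    rw [Set.indicator_of_notMem hi]


lemma integral_pi_catMeasure (s n : ℕ) (θ : Fin s → ℝ) (hθ : ∀ j, 0 ≤ θ j)
    (f : (Fin n → Fin s → ℝ) → ℝ) (hf : Measurable f) :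
    ∫ x, f x ∂(Measure.pi fun _ : Fin n => catMeasure s θ)
      = ∑ g : Fin n → Fin s, (∏ i, θ (g i)) * f (fun i => basisVec s (g i)) := by
  rw [pi_catMeasure]
  rw [integral_finset_sum_measure (fun g _ => ?_)]
  · refine Finset.sum_congr rfl fun g _ => ?_
    rw [integral_smul_measure, integral_dirac' _ _ hf.stronglyMeasurable,
      ENNReal.toReal_prod]
    simp only [ENNReal.toReal_ofReal (hθ _), smul_eq_mul]
  · refine Integrable.smul_measure ?_ (ENNReal.prod_lt_top (fun i _ => ENNReal.ofReal_lt_top)).ne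
    exact (integrable_const _).congr (ae_eq_dirac' hf).symm

def sgnB (δ : ℝ) (b : Bool) : ℝ := if b then δ else -δ

lemma sgnB_not (δ : ℝ) (b : Bool) : sgnB δ (!b) = - sgnB δ b := by
  cases b <;> simp [sgnB]

lemma sgnB_sq (δ : ℝ) (b : Bool) : sgnB δ b ^ 2 = δ ^ 2 := by
  cases b <;> simp [sgnB]

lemma abs_sgnB_le {δ : ℝ} (hδ : 0 ≤ δ) (b : Bool) : |sgnB δ b| ≤ δ := by
  cases b <;> simp [sgnB, abs_of_nonneg hδ, abs_of_nonpos (neg_nonpos.mpr hδ)]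

/-- the hypercube parameter family -/
def thetaP (m : ℕ) (δ : ℝ) (τ : Fin m → Bool) : Fin (m + m) → ℝ :=
  Fin.addCases (fun k => (1 + sgnB δ (τ k)) / (m + m)) (fun k => (1 - sgnB δ (τ k)) / (m + m))

lemma thetaP_left (m : ℕ) (δ : ℝ) (τ : Fin m → Bool) (k : Fin m) :
    thetaP m δ τ (Fin.castAdd m k) = (1 + sgnB δ (τ k)) / ((m:ℝ) + (m:ℝ)) := by
  rw [thetaP, Fin.addCases_left]

lemma thetaP_right (m : ℕ) (δ : ℝ) (τ : Fin m → Bool) (k : Fin m) :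
    thetaP m δ τ (Fin.natAdd m k) = (1 - sgnB δ (τ k)) / ((m:ℝ) + (m:ℝ)) := by
  rw [thetaP, Fin.addCases_right]

lemma thetaP_mem_simplex (m : ℕ) (hm : 0 < m) {δ : ℝ} (hδ0 : 0 ≤ δ) (hδ1 : δ ≤ 1)
    (τ : Fin m → Bool) : thetaP m δ τ ∈ simplex (m + m) := by
  have hS : (0:ℝ) < (m:ℝ) + (m:ℝ) := by positivity
  constructor
  · intro j
    induction j using Fin.addCases with
    | left k =>
        rw [thetaP_left]
        have := abs_sgnB_le hδ0 (τ k)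
        have := abs_le.mp this
        apply div_nonneg (by linarith) (by push_cast; linarith)
    | right k =>
        rw [thetaP_right]
        have := abs_le.mp (abs_sgnB_le hδ0 (τ k))
        apply div_nonneg (by linarith) (by push_cast; linarith)
  · rw [Fin.sum_univ_add]
    simp only [thetaP_left, thetaP_right]
    rw [← Finset.sum_add_distrib]
    have : ∀ k : Fin m, (1 + sgnB δ (τ k)) / ((m:ℝ)+(m:ℝ)) + (1 - sgnB δ (τ k)) / ((m:ℝ)+(m:ℝ))
        = 2 / ((m:ℝ)+(m:ℝ)) := by
      intro k
      ring
    rw [Finset.sum_congr rfl fun k _ => this k, Finset.sum_const, Finset.card_univ,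
      Fintype.card_fin, nsmul_eq_mul]
    field_simp
    ring

def guessB {m : ℕ} (u : Fin (m + m) → ℝ) (k : Fin m) : Bool :=
  decide (u (Fin.natAdd m k) ≤ u (Fin.castAdd m k))

def flipB {m : ℕ} (k : Fin m) (τ : Fin m → Bool) : Fin m → Bool :=
  Function.update τ k (!τ k)

lemma flipB_apply_self {m : ℕ} (k : Fin m) (τ : Fin m → Bool) : flipB k τ k = !τ k := by
  simp [flipB]

lemma flipB_apply_ne {m : ℕ} (k l : Fin m) (τ : Fin m → Bool) (h : l ≠ k) :
    flipB k τ l = τ l := by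
  simp [flipB, Function.update_of_ne h]

lemma flipB_involutive {m : ℕ} (k : Fin m) : Function.Involutive (flipB k) := by
  intro τ
  funext l
  by_cases h : l = k
  · subst h; simp [flipB]
  · rw [flipB_apply_ne _ _ _ h, flipB_apply_ne _ _ _ h]

/-- Pointwise Assouad bound: mismatch count lower-bounds TV distance. -/
lemma dTV_lower (m : ℕ) (hm : 0 < m) {δ : ℝ} (hδ : 0 ≤ δ) (u : Fin (m + m) → ℝ)
    (τ : Fin m → Bool) :
    (δ / ((m:ℝ) + m)) * ∑ k, (if guessB u k = τ k then (0:ℝ) else 1) ≤ dTV u (thetaP m δ τ) := by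
  have hS : (0:ℝ) < (m:ℝ) + (m:ℝ) := by positivity
  rw [dTV, Fin.sum_univ_add, ← Finset.sum_add_distrib, Finset.mul_sum]
  rw [show (1:ℝ)/2 * ∑ k : Fin m, (|u (Fin.castAdd m k) - thetaP m δ τ (Fin.castAdd m k)| +
      |u (Fin.natAdd m k) - thetaP m δ τ (Fin.natAdd m k)|)
    = ∑ k : Fin m, (1/2) * (|u (Fin.castAdd m k) - thetaP m δ τ (Fin.castAdd m k)| +
      |u (Fin.natAdd m k) - thetaP m δ τ (Fin.natAdd m k)|) from Finset.mul_sum ..]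
  refine Finset.sum_le_sum fun k _ => ?_
  set a := u (Fin.castAdd m k)
  set c := u (Fin.natAdd m k)
  rw [thetaP_left, thetaP_right]
  by_cases hg : guessB u k = τ k
  · rw [if_pos hg]
    have := abs_nonneg (a - (1 + sgnB δ (τ k)) / ((m:ℝ) + ↑m))
    have := abs_nonneg (c - (1 - sgnB δ (τ k)) / ((m:ℝ) + ↑m))
    nlinarith
  · rw [if_neg hg]
    have key : 2 * δ / ((m:ℝ) + m) ≤ |a - (1 + sgnB δ (τ k)) / ((m:ℝ) + ↑m)| +
        |c - (1 - sgnB δ (τ k)) / ((m:ℝ) + ↑m)| := by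
      have habs : |(a - (1 + sgnB δ (τ k)) / ((m:ℝ) + ↑m)) - (c - (1 - sgnB δ (τ k)) / ((m:ℝ) + ↑m))|
          ≤ |a - (1 + sgnB δ (τ k)) / ((m:ℝ) + ↑m)| + |c - (1 - sgnB δ (τ k)) / ((m:ℝ) + ↑m)| :=
        abs_sub _ _
      have hdiff : (1 + sgnB δ (τ k)) / ((m:ℝ) + ↑m) - (1 - sgnB δ (τ k)) / ((m:ℝ) + ↑m)
          = 2 * sgnB δ (τ k) / ((m:ℝ) + m) := by ring
      cases hτ : τ k with
      | true =>
          have hg' : guessB u k = false := by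
            cases hgg : guessB u k
            · rfl
            · exact absurd (hgg.trans hτ.symm) hg
          have hac : a < c := by
            have := of_decide_eq_false (hg' : decide (c ≤ a) = false)
            linarith [not_le.mp this]
          have h2 : -((a - (1 + sgnB δ (τ k)) / ((m:ℝ) + ↑m)) - (c - (1 - sgnB δ (τ k)) / ((m:ℝ) + ↑m)))
              ≤ |(a - (1 + sgnB δ (τ k)) / ((m:ℝ) + ↑m)) - (c - (1 - sgnB δ (τ k)) / ((m:ℝ) + ↑m))| :=
            neg_le_abs _
          have hsg : sgnB δ true = δ := by simp [sgnB]
          rw [hτ] at habs h2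
          rw [hsg] at habs h2 ⊢
          have hdd : (2:ℝ) * δ / ((m:ℝ) + m) ≤ -((a - (1 + δ) / ((m:ℝ) + ↑m)) - (c - (1 - δ) / ((m:ℝ) + ↑m))) := by
            have : -((a - (1 + δ) / ((m:ℝ) + ↑m)) - (c - (1 - δ) / ((m:ℝ) + ↑m)))
                = (c - a) + ((1 + δ) / ((m:ℝ) + ↑m) - (1 - δ) / ((m:ℝ) + ↑m)) := by ring
            rw [this]
            have h3 : (1 + δ) / ((m:ℝ) + ↑m) - (1 - δ) / ((m:ℝ) + ↑m) = 2 * δ / ((m:ℝ) + m) := by ring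
            linarith
          linarith
      | false =>
          have hg' : guessB u k = true := by
            cases hgg : guessB u k
            · exact absurd (hgg.trans hτ.symm) hg
            · rfl
          have hca : c ≤ a := of_decide_eq_true hg'
          have h2 : ((a - (1 + sgnB δ (τ k)) / ((m:ℝ) + ↑m)) - (c - (1 - sgnB δ (τ k)) / ((m:ℝ) + ↑m)))
              ≤ |(a - (1 + sgnB δ (τ k)) / ((m:ℝ) + ↑m)) - (c - (1 - sgnB δ (τ k)) / ((m:ℝ) + ↑m))| :=
            le_abs_self _
          have hsg : sgnB δ false = -δ := by simp [sgnB]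
          rw [hτ] at habs h2
          rw [hsg] at habs h2 ⊢
          have hdd : (2:ℝ) * δ / ((m:ℝ) + m) ≤ ((a - (1 + -δ) / ((m:ℝ) + ↑m)) - (c - (1 - -δ) / ((m:ℝ) + ↑m))) := by
            have : ((a - (1 + -δ) / ((m:ℝ) + ↑m)) - (c - (1 - -δ) / ((m:ℝ) + ↑m)))
                = (a - c) + ((1 - -δ) / ((m:ℝ) + ↑m) - (1 + -δ) / ((m:ℝ) + ↑m)) := by ring
            rw [this]
            have h3 : (1 - -δ) / ((m:ℝ) + ↑m) - (1 + -δ) / ((m:ℝ) + ↑m) = 2 * δ / ((m:ℝ) + m) := by ring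
            linarith
          linarith
    have hrw : δ / ((m:ℝ) + m) * 1 = 1/2 * (2 * δ / ((m:ℝ) + m)) := by ring
    rw [hrw]
    linarith

lemma thetaP_affinity (m : ℕ) (hm : 0 < m) {δ : ℝ} (hδ0 : 0 ≤ δ) (hδ1 : δ ≤ 1)
    (τ : Fin m → Bool) (k : Fin m) :
    1 - 2 * δ^2 / ((m:ℝ) + m)
      ≤ ∑ j, Real.sqrt (thetaP m δ τ j * thetaP m δ (flipB k τ) j) := by
  classical
  have hS : (0:ℝ) < (m:ℝ) + (m:ℝ) := by positivity
  rw [Fin.sum_univ_add, ← Finset.sum_add_distrib]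
  have hterm : ∀ k' : Fin m, 2/((m:ℝ)+m) - (if k' = k then 2*δ^2/((m:ℝ)+m) else 0)
      ≤ Real.sqrt (thetaP m δ τ (Fin.castAdd m k') * thetaP m δ (flipB k τ) (Fin.castAdd m k'))
        + Real.sqrt (thetaP m δ τ (Fin.natAdd m k') * thetaP m δ (flipB k τ) (Fin.natAdd m k')) := by
    intro k'
    have hσ := abs_le.mp (abs_sgnB_le hδ0 (τ k'))
    rw [thetaP_left, thetaP_left, thetaP_right, thetaP_right]
    by_cases h : k' = k
    · subst h
      rw [flipB_apply_self, sgnB_not, if_pos rfl]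
      set σ := sgnB δ (τ k') with hσdef
      have hσ2 : σ^2 = δ^2 := sgnB_sq δ _
      have hnn : 0 ≤ (1 - δ^2)/((m:ℝ)+m) := by
        apply div_nonneg _ (le_of_lt hS); nlinarith
      have hδsq : δ^2 ≤ 1 := by nlinarith
      have hbase : ((1:ℝ)-δ^2)^2 ≤ 1 - δ^2 := by
        nlinarith [mul_nonneg (by linarith : (0:ℝ) ≤ 1 - δ^2) (sq_nonneg δ)]
      have hexp : (1+σ)*(1+-σ) = 1 - δ^2 := by rw [← hσ2]; ring
      have hexp' : (1-σ)*(1- -σ) = 1 - δ^2 := by rw [← hσ2]; ring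
      have hnum : ((1:ℝ)-δ^2)^2 ≤ (1+σ)*(1+-σ) := hbase.trans_eq hexp.symm
      have hnum' : ((1:ℝ)-δ^2)^2 ≤ (1-σ)*(1- -σ) := hbase.trans_eq hexp'.symm
      have hp1 : ((1-δ^2)/((m:ℝ)+m))^2 ≤ (1 + σ)/((m:ℝ)+m) * ((1 + -σ)/((m:ℝ)+m)) := by
        rw [div_pow, div_mul_div_comm, ← sq ((m:ℝ)+(m:ℝ))]
        gcongr
      have hp2 : ((1-δ^2)/((m:ℝ)+m))^2 ≤ (1 - σ)/((m:ℝ)+m) * ((1 - -σ)/((m:ℝ)+m)) := by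
        rw [div_pow, div_mul_div_comm, ← sq ((m:ℝ)+(m:ℝ))]
        gcongr
      have h1 : (1-δ^2)/((m:ℝ)+m) ≤
          Real.sqrt ((1 + σ)/((m:ℝ)+m) * ((1 + -σ)/((m:ℝ)+m))) :=
        (Real.sqrt_sq hnn).symm.trans_le (Real.sqrt_le_sqrt hp1)
      have h2 : (1-δ^2)/((m:ℝ)+m) ≤
          Real.sqrt ((1 - σ)/((m:ℝ)+m) * ((1 - -σ)/((m:ℝ)+m))) :=
        (Real.sqrt_sq hnn).symm.trans_le (Real.sqrt_le_sqrt hp2)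
      have hlin : 2/((m:ℝ)+m) - 2*δ^2/((m:ℝ)+m) = 2*((1-δ^2)/((m:ℝ)+m)) := by ring
      linarith
    · rw [flipB_apply_ne _ _ _ h, if_neg h]
      have hx1 : (0:ℝ) ≤ (1 + sgnB δ (τ k'))/((m:ℝ)+m) :=
        div_nonneg (by linarith) (le_of_lt hS)
      have hx2 : (0:ℝ) ≤ (1 - sgnB δ (τ k'))/((m:ℝ)+m) :=
        div_nonneg (by linarith) (le_of_lt hS)
      rw [Real.sqrt_mul_self hx1, Real.sqrt_mul_self hx2]
      have : (1 + sgnB δ (τ k'))/((m:ℝ)+m) + (1 - sgnB δ (τ k'))/((m:ℝ)+m) = 2/((m:ℝ)+m) := by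
        ring
      linarith
  calc 1 - 2 * δ^2 / ((m:ℝ) + m)
      = ∑ k' : Fin m, (2/((m:ℝ)+m) - (if k' = k then 2*δ^2/((m:ℝ)+m) else 0)) := by
        rw [Finset.sum_sub_distrib, Finset.sum_const, Finset.card_univ, Fintype.card_fin,
          Finset.sum_ite_eq' Finset.univ k (fun _ => 2*δ^2/((m:ℝ)+m)), if_pos (Finset.mem_univ k),
          nsmul_eq_mul]
        congr 1
        field_simp
        ring
    _ ≤ _ := Finset.sum_le_sum fun k' _ => hterm k'

lemma sqrt_prod {ι : Type*} (t : Finset ι) (f : ι → ℝ) (hf : ∀ i ∈ t, 0 ≤ f i) :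
    Real.sqrt (∏ i ∈ t, f i) = ∏ i ∈ t, Real.sqrt (f i) := by
  classical
  induction t using Finset.induction_on with
  | empty => simp
  | @insert a s' hx ih =>
      rw [Finset.prod_insert hx, Finset.prod_insert hx,
        Real.sqrt_mul (hf a (Finset.mem_insert_self a s')),
        ih fun i hi => hf i (Finset.mem_insert_of_mem hi)]

/-- Abstract Assouad lemma over a finite sample space. -/
lemma assouad_core {G : Type*} [Fintype G] {m : ℕ}
    (W : (Fin m → Bool) → G → ℝ)
    (hW0 : ∀ τ g, 0 ≤ W τ g) (hW1 : ∀ τ, ∑ g, W τ g = 1)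
    (haff : ∀ (k : Fin m) (τ : Fin m → Bool),
      (7:ℝ)/8 ≤ ∑ g, Real.sqrt (W τ g * W (flipB k τ) g))
    (hat : G → Fin m → Bool)
    (r : (Fin m → Bool) → ℝ) (c : ℝ) (hc : 0 ≤ c)
    (hr : ∀ τ, c * ∑ g, W τ g * (∑ k, if hat g k = τ k then (0:ℝ) else 1) ≤ r τ)
    (b : ℝ) (hb : ∀ τ, r τ ≤ b) :
    c * m / 8 ≤ b := by
  classical
  set A : Fin m → (Fin m → Bool) → ℝ :=
    fun k τ => ∑ g, W τ g * (if hat g k = τ k then (0:ℝ) else 1) with hA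
  -- pair bound
  have hmin : ∀ (k : Fin m) (τ : Fin m → Bool),
      (1:ℝ)/4 ≤ A k τ + A k (flipB k τ) := by
    intro k τ
    have hmin_le : ∀ g, min (W τ g) (W (flipB k τ) g)
        ≤ W τ g * (if hat g k = τ k then (0:ℝ) else 1)
          + W (flipB k τ) g * (if hat g k = flipB k τ k then (0:ℝ) else 1) := by
      intro g
      rw [flipB_apply_self]
      by_cases h : hat g k = τ k
      · rw [if_pos h, if_neg (by simp [h])]
        simpa using min_le_right (W τ g) (W (flipB k τ) g)
      · rw [if_neg h, if_pos (by cases hτ : τ k <;> cases hh : hat g k <;> simp_all)]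
        simpa using min_le_left (W τ g) (W (flipB k τ) g)
    -- Cauchy-Schwarz: (∑ √(WW'))² ≤ (∑ min)(∑ max)
    have hCS : (∑ g, Real.sqrt (W τ g * W (flipB k τ) g))^2
        ≤ (∑ g, min (W τ g) (W (flipB k τ) g)) * ∑ g, max (W τ g) (W (flipB k τ) g) := by
      refine Finset.sum_sq_le_sum_mul_sum_of_sq_eq_mul _ (fun g _ => ?_) (fun g _ => ?_)
        (fun g _ => ?_)
      · exact le_min (hW0 _ _) (hW0 _ _)
      · exact le_max_of_le_left (hW0 _ _)
      · rw [Real.sq_sqrt (mul_nonneg (hW0 _ _) (hW0 _ _)), min_mul_max]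
    have hmax : ∑ g, max (W τ g) (W (flipB k τ) g) ≤ 2 := by
      calc ∑ g, max (W τ g) (W (flipB k τ) g) ≤ ∑ g, (W τ g + W (flipB k τ) g) :=
            Finset.sum_le_sum fun g _ => max_le_add_of_nonneg (hW0 _ _) (hW0 _ _)
        _ = 2 := by rw [Finset.sum_add_distrib, hW1, hW1]; norm_num
    have hmin_nonneg : 0 ≤ ∑ g, min (W τ g) (W (flipB k τ) g) :=
      Finset.sum_nonneg fun g _ => le_min (hW0 _ _) (hW0 _ _)
    have h78 := haff k τ
    have hsum_min : (1:ℝ)/4 ≤ ∑ g, min (W τ g) (W (flipB k τ) g) := by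
      nlinarith
    calc (1:ℝ)/4 ≤ ∑ g, min (W τ g) (W (flipB k τ) g) := hsum_min
      _ ≤ A k τ + A k (flipB k τ) := by
          rw [hA, ← Finset.sum_add_distrib]
          exact Finset.sum_le_sum fun g _ => hmin_le g
  -- sum over τ of A k τ
  have hAsum : ∀ k : Fin m, (2:ℝ)^m / 8 ≤ ∑ τ : Fin m → Bool, A k τ := by
    intro k
    have hflip_sum : ∑ τ : Fin m → Bool, A k (flipB k τ) = ∑ τ : Fin m → Bool, A k τ :=
      Fintype.sum_bijective (flipB k) (flipB_involutive k).bijective _ _ fun τ => rfl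
    have : ∑ τ : Fin m → Bool, ((1:ℝ)/4) ≤ ∑ τ : Fin m → Bool, (A k τ + A k (flipB k τ)) :=
      Finset.sum_le_sum fun τ _ => hmin k τ
    rw [Finset.sum_add_distrib, hflip_sum, Finset.sum_const, Finset.card_univ] at this
    have hcard : (Fintype.card (Fin m → Bool) : ℝ) = 2^m := by
      rw [Fintype.card_fun]; simp
    rw [nsmul_eq_mul, hcard] at this
    linarith
  -- combine
  have hfinal : (2:ℝ)^m * (c * m / 8) ≤ ∑ τ : Fin m → Bool, r τ := by
    calc (2:ℝ)^m * (c * m / 8) = c * (↑m * ((2:ℝ)^m / 8)) := by ring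
      _ ≤ c * ∑ k : Fin m, ∑ τ : Fin m → Bool, A k τ := by
          apply mul_le_mul_of_nonneg_left _ hc
          calc (m:ℝ) * ((2:ℝ)^m / 8) = ∑ _k : Fin m, ((2:ℝ)^m / 8) := by
                rw [Finset.sum_const, Finset.card_univ, Fintype.card_fin, nsmul_eq_mul]
            _ ≤ _ := Finset.sum_le_sum fun k _ => hAsum k
      _ = ∑ τ : Fin m → Bool, c * ∑ g, W τ g * (∑ k, if hat g k = τ k then (0:ℝ) else 1) := by
          have hswap : ∀ τ, ∑ k, A k τ
              = ∑ g, W τ g * ∑ k, (if hat g k = τ k then (0:ℝ) else 1) := by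
            intro τ
            rw [hA, Finset.sum_comm]
            exact Finset.sum_congr rfl fun g _ => (Finset.mul_sum _ _ _).symm
          rw [Finset.sum_comm, Finset.mul_sum]
          exact Finset.sum_congr rfl fun τ _ => by rw [hswap τ]
      _ ≤ ∑ τ : Fin m → Bool, r τ := Finset.sum_le_sum fun τ _ => hr τ
  have hbsum : ∑ τ : Fin m → Bool, r τ ≤ (2:ℝ)^m * b := by
    calc ∑ τ : Fin m → Bool, r τ ≤ ∑ _τ : Fin m → Bool, b := Finset.sum_le_sum fun τ _ => hb τ
      _ = (2:ℝ)^m * b := by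
          rw [Finset.sum_const, Finset.card_univ, nsmul_eq_mul, Fintype.card_fun]
          simp
  have h2m : (0:ℝ) < 2^m := by positivity
  exact (mul_le_mul_iff_right₀ h2m).mp (hfinal.trans hbsum)

/-- Minimax lower bound `c·(s/n)^{1/2}` in TV-distance for the outlier-free
categorical model: any uniform upper bound `b` on the risk of an estimator is at
least `c·(s/n)^{1/2}`. -/
theorem minimax_lower_bound_TV_outlier_free :
    ∃ c : ℝ, 0 < c ∧ ∀ s n : ℕ, Even s → 16 ≤ s → s ≤ n →
      ∀ est : (Fin n → Fin s → ℝ) → Fin s → ℝ, Measurable est →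
        (∀ x, est x ∈ simplex s) →
        ∀ b : ℝ,
          (∀ θ : Fin s → ℝ, θ ∈ simplex s →
            ∫ x, dTV (est x) θ ∂(Measure.pi fun _ : Fin n => catMeasure s θ) ≤ b) →
          c * Real.sqrt (s / n) ≤ b := by
  classical
  refine ⟨1/25600, by norm_num, ?_⟩
  intro s n hse hs16 hsn est hest hsimp b hb
  obtain ⟨m, rfl⟩ := hse
  have hm : 8 ≤ m := by omega
  have hm0 : 0 < m := by omega
  have hn0 : 0 < n := by omega
  have hS : (0:ℝ) < (m:ℝ) + (m:ℝ) := by positivity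
  have hSn : ((m:ℝ) + m) ≤ (n:ℝ) := by
    have : ((m+m : ℕ) : ℝ) ≤ (n:ℝ) := Nat.cast_le.mpr hsn
    push_cast at this
    linarith
  set δ : ℝ := Real.sqrt (((m:ℝ) + m) / n) / 4 with hδdef
  have hratio0 : (0:ℝ) ≤ ((m:ℝ) + m) / n := by positivity
  have hratio1 : ((m:ℝ) + m) / n ≤ 1 := by
    rw [div_le_one (by positivity)]
    exact hSn
  have hδ0 : 0 ≤ δ := by positivity
  have hδ1 : δ ≤ 1 := by
    have hsq : Real.sqrt (((m:ℝ) + m) / n) ≤ 1 := by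
      rw [show (1:ℝ) = Real.sqrt 1 by simp]
      exact Real.sqrt_le_sqrt hratio1
    rw [hδdef]
    linarith
  have hδsq : δ^2 = ((m:ℝ) + m) / n / 16 := by
    rw [hδdef, div_pow, Real.sq_sqrt hratio0]
    norm_num
  -- sample-space map and weights
  set V : (Fin n → Fin (m+m)) → (Fin n → Fin (m+m) → ℝ) :=
    fun g i => basisVec (m+m) (g i) with hV
  set W : (Fin m → Bool) → (Fin n → Fin (m+m)) → ℝ :=
    fun τ g => ∏ i, thetaP m δ τ (g i) with hW
  have hθsimplex : ∀ τ, thetaP m δ τ ∈ simplex (m+m) :=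
    fun τ => thetaP_mem_simplex m hm0 hδ0 hδ1 τ
  have hθ0 : ∀ τ j, 0 ≤ thetaP m δ τ j := fun τ => (hθsimplex τ).1
  have hθ1 : ∀ τ, ∑ j, thetaP m δ τ j = 1 := fun τ => (hθsimplex τ).2
  have hW0 : ∀ τ g, 0 ≤ W τ g := fun τ g => Finset.prod_nonneg fun i _ => hθ0 τ (g i)
  have hW1 : ∀ τ, ∑ g, W τ g = 1 := by
    intro τ
    rw [hW]
    rw [← Fintype.piFinset_univ, ← Finset.prod_univ_sum]
    simp [hθ1 τ]
  -- risk identity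
  have hmeas : ∀ τ, Measurable fun x => dTV (est x) (thetaP m δ τ) := by
    intro τ
    simp only [dTV]
    apply Measurable.const_mul
    apply Finset.measurable_sum
    intro j _
    exact (((measurable_pi_apply j).comp hest).sub measurable_const).abs
  have hrisk : ∀ τ, ∫ x, dTV (est x) (thetaP m δ τ)
        ∂(Measure.pi fun _ : Fin n => catMeasure (m+m) (thetaP m δ τ))
      = ∑ g, W τ g * dTV (est (V g)) (thetaP m δ τ) := by
    intro τ
    rw [integral_pi_catMeasure (m+m) n (thetaP m δ τ) (hθ0 τ) _ (hmeas τ)]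
  -- affinity bound for products
  have haff : ∀ (k : Fin m) (τ : Fin m → Bool),
      (7:ℝ)/8 ≤ ∑ g, Real.sqrt (W τ g * W (flipB k τ) g) := by
    intro k τ
    have hρdef : ∀ g : Fin n → Fin (m+m), Real.sqrt (W τ g * W (flipB k τ) g)
        = ∏ i, Real.sqrt (thetaP m δ τ (g i) * thetaP m δ (flipB k τ) (g i)) := by
      intro g
      rw [hW]
      rw [← Finset.prod_mul_distrib]
      exact sqrt_prod _ _ fun i _ => mul_nonneg (hθ0 τ (g i)) (hθ0 (flipB k τ) (g i))
    set ρ : ℝ := ∑ j, Real.sqrt (thetaP m δ τ j * thetaP m δ (flipB k τ) j) with hρ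
    have hsum : ∑ g, Real.sqrt (W τ g * W (flipB k τ) g) = ρ ^ n := by
      rw [Finset.sum_congr rfl fun g _ => hρdef g]
      have hps := Finset.prod_univ_sum (fun _ : Fin n => (Finset.univ : Finset (Fin (m+m))))
        (fun _ x => Real.sqrt (thetaP m δ τ x * thetaP m δ (flipB k τ) x))
      rw [← Fintype.piFinset_univ, ← hps, ← hρ, Finset.prod_const, Finset.card_univ,
        Fintype.card_fin]
    rw [hsum]
    have hρ0 : 0 ≤ ρ := Finset.sum_nonneg fun j _ => Real.sqrt_nonneg _
    have hρlb : 1 - 2 * δ^2 / ((m:ℝ) + m) ≤ ρ := thetaP_affinity m hm0 hδ0 hδ1 τ k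
    have hval : 2 * δ^2 / ((m:ℝ) + m) = 1 / (8 * n) := by
      rw [hδsq]
      field_simp
      ring
    have hbase0 : (0:ℝ) ≤ 1 - 2 * δ^2 / ((m:ℝ) + m) := by
      rw [hval]
      have : (1:ℝ) / (8 * n) ≤ 1 := by
        rw [div_le_one (by positivity)]
        have : (1:ℝ) ≤ (n:ℝ) := by exact_mod_cast hn0
        linarith
      linarith
    have hpow : (1 - 2 * δ^2 / ((m:ℝ) + m)) ^ n ≤ ρ ^ n := pow_le_pow_left₀ hbase0 hρlb n
    have hbern : 1 + (n:ℝ) * (-(1/(8 * n))) ≤ (1 + (-(1/(8 * n)))) ^ n := by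
      apply one_add_mul_le_pow
      have h1 : (0:ℝ) < 8 * n := by positivity
      have : (1:ℝ)/(8*n) ≤ 1 := by
        rw [div_le_one h1]
        have : (1:ℝ) ≤ (n:ℝ) := by exact_mod_cast hn0
        linarith
      linarith
    have heq : 1 + (-(1/(8 * (n:ℝ)))) = 1 - 2 * δ^2 / ((m:ℝ) + m) := by rw [hval]; ring
    have hlin : 1 + (n:ℝ) * (-(1/(8 * n))) = 7/8 := by
      have hne : (n:ℝ) ≠ 0 := by positivity
      field_simp
      ring
    rw [heq, hlin] at hbern
    linarith
  -- pointwise risk lower bound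
  have hr : ∀ τ, (δ / ((m:ℝ) + m)) *
      ∑ g, W τ g * (∑ k, if guessB (est (V g)) k = τ k then (0:ℝ) else 1)
      ≤ ∑ g, W τ g * dTV (est (V g)) (thetaP m δ τ) := by
    intro τ
    rw [Finset.mul_sum]
    refine Finset.sum_le_sum fun g _ => ?_
    have hlow := dTV_lower m hm0 hδ0 (est (V g)) τ
    calc δ / ((m:ℝ) + m) * (W τ g * ∑ k, if guessB (est (V g)) k = τ k then (0:ℝ) else 1)
        = W τ g * ((δ / ((m:ℝ) + m)) * ∑ k, if guessB (est (V g)) k = τ k then (0:ℝ) else 1) := by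
          ring
      _ ≤ W τ g * dTV (est (V g)) (thetaP m δ τ) :=
          mul_le_mul_of_nonneg_left hlow (hW0 τ g)
  -- apply the abstract Assouad lemma
  have hc0 : 0 ≤ δ / ((m:ℝ) + m) := by positivity
  have hbr : ∀ τ, ∑ g, W τ g * dTV (est (V g)) (thetaP m δ τ) ≤ b := by
    intro τ
    rw [← hrisk τ]
    exact hb (thetaP m δ τ) (hθsimplex τ)
  have hfinal := assouad_core W hW0 hW1 haff (fun g => guessB (est (V g)))
    (fun τ => ∑ g, W τ g * dTV (est (V g)) (thetaP m δ τ)) (δ / ((m:ℝ) + m)) hc0 hr b hbr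
  -- conclude
  have hms : (δ / ((m:ℝ) + m)) * m / 8 = δ / 16 := by
    field_simp
    ring
  rw [hms] at hfinal
  have hcast : ((m + m : ℕ) : ℝ) = (m:ℝ) + m := by push_cast; ring
  rw [hcast]
  have hsqrt0 : 0 ≤ Real.sqrt (((m:ℝ) + m) / n) := Real.sqrt_nonneg _
  have : δ / 16 = Real.sqrt (((m:ℝ) + m) / n) / 64 := by rw [hδdef]; ring
  rw [this] at hfinal
  linarith

end
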